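/- For the explicit orientation K of the complete balanced n-partite graph with parts of size m built on the n×m checkerboard, any coloring of the vertices with no monochromatic directed triangle uses at least nm/(n+2m−2) colors. -/

import Mathlib

/-- Lexicographic order on cells of the checkerboard. -/
def clt (p q : ℕ × ℕ) : Prop := p.1 < q.1 ∨ (p.1 = q.1 ∧ p.2 < q.2)

/-- The n × m checkerboard: cells (i,j) with 1 ≤ i ≤ n, 1 ≤ j ≤ m. -/
def board (n m : ℕ) : Finset (ℕ × ℕ) := Finset.Icc 1 n ×ˢ Finset.Icc 1 m

/-- A set of cells is c-sparse if no cell of the set in a different column lies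
strictly (lexicographically) between two cells of the set in the same column. -/
def CSparse (S : Finset (ℕ × ℕ)) : Prop :=
  ∀ a₁ a₂ b x y, (a₁, b) ∈ S → (a₂, b) ∈ S → (x, y) ∈ S → y ≠ b →
    clt (a₁, b) (x, y) → clt (x, y) (a₂, b) → False

/-- The orientation of the complete balanced n-partite graph built on the checkerboard:
rows are the independent sets; for cells in distinct rows, within a column the edge goes
from the lexicographically smaller cell to the larger, between different columns from the
larger to the smaller. -/
def kedge (p q : ℕ × ℕ) : Prop :=
  p.1 ≠ q.1 ∧ ((p.2 = q.2 ∧ clt p q) ∨ (p.2 ≠ q.2 ∧ clt q p))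

lemma key_of_trifree (S : Finset (ℕ × ℕ))
    (htri : ¬ ∃ u ∈ S, ∃ v ∈ S, ∃ w ∈ S, kedge u v ∧ kedge v w ∧ kedge w u) :
    ∀ a₁ a₂ b x y, (a₁, b) ∈ S → (a₂, b) ∈ S → (x, y) ∈ S → y ≠ b →
      a₁ < x → x < a₂ → False := by
  intro a₁ a₂ b x y h1 h2 h3 hyb hax hxa
  exact htri ⟨(a₁, b), h1, (a₂, b), h2, (x, y), h3, by
    refine ⟨⟨?_, Or.inl ⟨rfl, Or.inl ?_⟩⟩, ⟨?_, Or.inr ⟨?_, Or.inl ?_⟩⟩,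
      ⟨?_, Or.inr ⟨hyb, Or.inl hax⟩⟩⟩ <;> simp <;> omega⟩

lemma class_card_bound (n m : ℕ) (hn : 1 ≤ n) (hm : 1 ≤ m) (S : Finset (ℕ × ℕ))
    (hsub : S ⊆ board n m)
    (hkey : ∀ a₁ a₂ b x y, (a₁, b) ∈ S → (a₂, b) ∈ S → (x, y) ∈ S → y ≠ b →
      a₁ < x → x < a₂ → False) :
    S.card + 2 ≤ n + 2 * m := by
  classical
  set J : Finset ℕ := S.image Prod.snd with hJ
  have hrow : ∀ p ∈ S, p.1 ∈ Finset.Icc 1 n := by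
    intro p hp
    have := hsub hp
    simp [board, Finset.mem_product] at this
    simp [Finset.mem_Icc]; omega
  have hJm : J.card ≤ m := by
    have : J ⊆ Finset.Icc 1 m := by
      intro j hj
      simp [hJ] at hj
      obtain ⟨a, ha⟩ := hj
      have := hsub ha
      simp [board, Finset.mem_product] at this
      simp [Finset.mem_Icc]; omega
    calc J.card ≤ (Finset.Icc 1 m).card := Finset.card_le_card this
      _ = m := by simp
  have hsum : S.card = ∑ j ∈ J, (S.filter (fun p => p.2 = j)).card :=
    Finset.card_eq_sum_card_fiberwise (fun p hp => Finset.mem_image_of_mem _ hp)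
  -- rows used in column j
  set R : ℕ → Finset ℕ := fun j => (S.filter (fun p => p.2 = j)).image Prod.fst with hR
  have hRmem : ∀ r j, r ∈ R j ↔ (r, j) ∈ S := by
    intro r j
    constructor
    · intro h
      obtain ⟨p, hp, hp1⟩ := Finset.mem_image.1 h
      obtain ⟨hpS, hp2⟩ := Finset.mem_filter.1 hp
      have : p = (r, j) := Prod.ext hp1 hp2
      exact this ▸ hpS
    · intro h
      exact Finset.mem_image.2 ⟨(r, j), Finset.mem_filter.2 ⟨h, rfl⟩, rfl⟩
  have hRcard : ∀ j, (R j).card = (S.filter (fun p => p.2 = j)).card := by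
    intro j
    apply Finset.card_image_of_injOn
    intro p hp q hq hpq
    simp [Finset.mem_filter] at hp hq
    exact Prod.ext hpq (hp.2.trans hq.2.symm)
  -- interiors
  set I : ℕ → Finset ℕ := fun j =>
    (R j).filter (fun r => (∃ a ∈ R j, a < r) ∧ (∃ b ∈ R j, r < b)) with hI
  have hIdisj : ∀ j j', j ≠ j' → ∀ r ∈ I j, r ∉ R j' := by
    intro j j' hne r hrI hrR'
    simp only [hI, Finset.mem_filter] at hrI
    obtain ⟨hrR, ⟨a, haR, har⟩, ⟨b, hbR, hrb⟩⟩ := hrI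
    exact hkey a b j r j' ((hRmem a j).1 haR) ((hRmem b j).1 hbR)
      ((hRmem r j').1 hrR') (Ne.symm hne) har hrb
  have hcI : ∀ j ∈ J, (S.filter (fun p => p.2 = j)).card ≤ (I j).card + 2 := by
    intro j hj
    have hne : (R j).Nonempty := by
      simp [hJ] at hj
      obtain ⟨a, ha⟩ := hj
      exact ⟨a, (hRmem a j).2 ha⟩
    have hsub2 : R j ⊆ I j ∪ {(R j).min' hne, (R j).max' hne} := by
      intro r hr
      by_cases h : (∃ a ∈ R j, a < r) ∧ (∃ b ∈ R j, r < b)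
      · exact Finset.mem_union_left _ (Finset.mem_filter.2 ⟨hr, h⟩)
      · rw [not_and_or] at h
        apply Finset.mem_union_right
        simp only [Finset.mem_insert, Finset.mem_singleton]
        rcases h with h | h
        · left
          push_neg at h
          exact le_antisymm (h _ ((R j).min'_mem hne)) (Finset.min'_le _ _ hr)
        · right
          push_neg at h
          exact le_antisymm (Finset.le_max' _ _ hr) (h _ ((R j).max'_mem hne))
    calc (S.filter (fun p => p.2 = j)).card = (R j).card := (hRcard j).symm
      _ ≤ (I j ∪ {(R j).min' hne, (R j).max' hne}).card := Finset.card_le_card hsub2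
      _ ≤ (I j).card + ({(R j).min' hne, (R j).max' hne} : Finset ℕ).card :=
          Finset.card_union_le _ _
      _ ≤ (I j).card + 2 := by
          have : ({(R j).min' hne, (R j).max' hne} : Finset ℕ).card ≤ 2 :=
            Finset.card_insert_le _ _ |>.trans (by simp)
          omega
  by_cases hA : ∃ j ∈ J, 2 ≤ (S.filter (fun p => p.2 = j)).card
  · obtain ⟨j0, hj0, hc2⟩ := hA
    have hne0 : (R j0).Nonempty := by
      rw [← Finset.card_pos, hRcard]; omega
    set a0 := (R j0).min' hne0 with ha0
    set b0 := (R j0).max' hne0 with hb0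
    have hab : a0 < b0 := by
      apply Finset.min'_lt_max'_of_card
      rw [hRcard]; omega
    set E : Finset ℕ := {a0, b0} with hE
    have hEcard : E.card = 2 := by
      rw [hE, Finset.card_insert_of_notMem (by simp; omega), Finset.card_singleton]
    -- interiors pairwise disjoint
    have hpair : ∀ j ∈ J, ∀ j' ∈ J, j ≠ j' → Disjoint (I j) (I j') := by
      intro j _ j' _ hne
      rw [Finset.disjoint_left]
      intro r hr hr'
      exact hIdisj j j' hne r hr (Finset.filter_subset _ _ hr')
    set T : Finset ℕ := J.biUnion I with hT
    have hTcard : T.card = ∑ j ∈ J, (I j).card := Finset.card_biUnion hpair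
    have hTE : Disjoint T E := by
      rw [Finset.disjoint_left]
      intro r hrT hrE
      simp only [hT, Finset.mem_biUnion] at hrT
      obtain ⟨j, hjJ, hrI⟩ := hrT
      have hrR0 : r ∈ R j0 := by
        simp only [hE, Finset.mem_insert, Finset.mem_singleton] at hrE
        rcases hrE with rfl | rfl
        · exact (R j0).min'_mem hne0
        · exact (R j0).max'_mem hne0
      by_cases hjj : j = j0
      · subst hjj
        simp only [hI, Finset.mem_filter] at hrI
        obtain ⟨_, ⟨a, haR, har⟩, ⟨b, hbR, hrb⟩⟩ := hrI
        simp only [hE, Finset.mem_insert, Finset.mem_singleton] at hrE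
        rcases hrE with rfl | rfl
        · exact absurd (Finset.min'_le _ _ haR) (by omega)
        · exact absurd (Finset.le_max' _ _ hbR) (by omega)
      · exact hIdisj j j0 hjj r hrI hrR0
    have hTEsub : T ∪ E ⊆ Finset.Icc 1 n := by
      intro r hr
      rcases Finset.mem_union.1 hr with h | h
      · simp only [hT, Finset.mem_biUnion] at h
        obtain ⟨j, _, hrI⟩ := h
        have : r ∈ R j := Finset.filter_subset _ _ hrI
        exact hrow (r, j) ((hRmem r j).1 this)
      · have hrR0 : r ∈ R j0 := by
          simp only [hE, Finset.mem_insert, Finset.mem_singleton] at h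
          rcases h with rfl | rfl
          · exact (R j0).min'_mem hne0
          · exact (R j0).max'_mem hne0
        exact hrow (r, j0) ((hRmem r j0).1 hrR0)
    have hTEn : T.card + 2 ≤ n := by
      have := Finset.card_le_card hTEsub
      rw [Finset.card_union_of_disjoint hTE, hEcard] at this
      simpa using this
    have hScard : S.card ≤ (∑ j ∈ J, (I j).card) + 2 * J.card := by
      rw [hsum]
      calc ∑ j ∈ J, (S.filter (fun p => p.2 = j)).card
          ≤ ∑ j ∈ J, ((I j).card + 2) := Finset.sum_le_sum hcI
        _ = (∑ j ∈ J, (I j).card) + 2 * J.card := by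
            rw [Finset.sum_add_distrib, Finset.sum_const, smul_eq_mul]; ring
    rw [hTcard] at hTEn
    omega
  · push_neg at hA
    have : S.card ≤ J.card := by
      rw [hsum]
      calc ∑ j ∈ J, (S.filter (fun p => p.2 = j)).card ≤ ∑ j ∈ J, 1 :=
          Finset.sum_le_sum (fun j hj => by have := hA j hj; omega)
        _ = J.card := by simp
    omega

theorem npartite_coloring_lower_bound (n m : ℕ) (hn : 1 ≤ n) (hm : 1 ≤ m)
    (Q : Finset (Finset (ℕ × ℕ)))
    (htri : ∀ S ∈ Q, ¬ ∃ u ∈ S, ∃ v ∈ S, ∃ w ∈ S, kedge u v ∧ kedge v w ∧ kedge w u)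
    (hdisj : ∀ S ∈ Q, ∀ T ∈ Q, S ≠ T → Disjoint S T)
    (hcover : Q.biUnion id = board n m) :
    ((n : ℚ) * m) / ((n : ℚ) + 2 * m - 2) ≤ Q.card := by
  classical
  have hboard : (board n m).card = n * m := by
    simp [board, Nat.card_Icc]
  have hsubS : ∀ S ∈ Q, S ⊆ board n m := by
    intro S hS
    rw [← hcover]
    exact Finset.subset_biUnion_of_mem id hS
  have hclass : ∀ S ∈ Q, S.card ≤ n + 2 * m - 2 := by
    intro S hS
    have := class_card_bound n m hn hm S (hsubS S hS)
      (key_of_trifree S (htri S hS))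
    omega
  have hcount : n * m ≤ Q.card * (n + 2 * m - 2) := by
    have h1 : (n * m : ℕ) = ∑ S ∈ Q, S.card := by
      rw [← hboard, ← hcover]
      exact Finset.card_biUnion hdisj
    calc n * m = ∑ S ∈ Q, S.card := h1
      _ ≤ ∑ _S ∈ Q, (n + 2 * m - 2) := Finset.sum_le_sum hclass
      _ = Q.card * (n + 2 * m - 2) := by rw [Finset.sum_const, smul_eq_mul]
  have hpos : (0 : ℚ) < (n : ℚ) + 2 * m - 2 := by
    have h1 : (1 : ℚ) ≤ n := by exact_mod_cast hn
    have h2 : (1 : ℚ) ≤ m := by exact_mod_cast hm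
    linarith
  rw [div_le_iff₀ hpos]
  have hcast : ((n * m : ℕ) : ℚ) ≤ ((Q.card * (n + 2 * m - 2) : ℕ) : ℚ) := by
    exact_mod_cast hcount
  have h2nm : 2 ≤ n + 2 * m := by omega
  rw [Nat.cast_mul, Nat.cast_mul, Nat.cast_sub h2nm] at hcast
  push_cast at hcast ⊢
  linarith
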